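/- Let x solve the self-appraisal dynamics with stochastic relative interaction matrices C(t_k) (zero diagonal), strong connectivity of every B-window union graph, and dwell times in [τ_min, τ_max]. If x(t₀) ∈ Δₙ \ {e₁,…,eₙ} has m ≥ 2 nonzero entries, then the set S(t) = {i : xᵢ(t) > 0} is nondecreasing in t (with respect to inclusion) and x(t) > 0 componentwise for all t ≥ t_{(n−m)B}. -/

import Mathlib

open Set Filter

/-- Derivative of `z ↦ (min z 0)^2`. -/
lemma minsq_hasDerivAt (y : ℝ) :
    HasDerivAt (fun z : ℝ => (min z 0) ^ 2) (2 * min y 0) y := by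
  rcases lt_trichotomy y 0 with hy | hy | hy
  · have h1 : HasDerivAt (fun z : ℝ => z ^ 2) (2 * y) y := by
      simpa using (hasDerivAt_pow 2 y)
    have he : (fun z : ℝ => z ^ 2) =ᶠ[nhds y] fun z => (min z 0) ^ 2 := by
      filter_upwards [Iio_mem_nhds hy] with z hz
      rw [min_eq_left (le_of_lt hz)]
    simpa [min_eq_left hy.le] using h1.congr_of_eventuallyEq he.symm
  · subst hy
    rw [hasDerivAt_iff_isLittleO]
    simp only [min_self, sub_zero, mul_zero, smul_zero]
    rw [Asymptotics.isLittleO_iff]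
    intro c hc
    filter_upwards [Metric.ball_mem_nhds (0:ℝ) hc] with z hz
    simp only [Metric.mem_ball, Real.dist_eq, sub_zero] at hz
    have h1 : |min z 0| ≤ |z| := by
      rcases le_total z 0 with h | h
      · rw [min_eq_left h]
      · rw [min_eq_right h]; simp [abs_nonneg]
    have : ‖(min z 0) ^ 2‖ ≤ |z| * |z| := by
      rw [Real.norm_eq_abs, abs_pow, sq]
      exact mul_le_mul h1 h1 (abs_nonneg _) (abs_nonneg _)
    have hz2 : |z| * |z| ≤ c * ‖z‖ := by
      rw [Real.norm_eq_abs]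
      exact mul_le_mul_of_nonneg_right hz.le (abs_nonneg _)
    calc ‖(min z 0) ^ 2 - 0 ^ 2‖ = ‖(min z 0) ^ 2‖ := by norm_num
      _ ≤ |z| * |z| := this
      _ ≤ c * ‖z‖ := hz2
  · have he : (fun z : ℝ => (0:ℝ)) =ᶠ[nhds y] fun z => (min z 0) ^ 2 := by
      filter_upwards [Ioi_mem_nhds hy] with z hz
      rw [min_eq_right (le_of_lt hz)]; norm_num
    simpa [min_eq_right hy.le] using (hasDerivAt_const y (0:ℝ)).congr_of_eventuallyEq he.symm

/-- Gronwall-type lemma: if `φ a ≤ 0` and `φ' ≤ L * φ` on `[a,b]`, then `φ ≤ 0` on `[a,b]`. -/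
lemma nonpos_of_deriv_le_gronwall (φ φ' : ℝ → ℝ) (a b L : ℝ)
    (hφa : φ a ≤ 0)
    (hd : ∀ u ∈ Set.Icc a b, HasDerivAt φ (φ' u) u)
    (hle : ∀ u ∈ Set.Icc a b, φ' u ≤ L * φ u) :
    ∀ u ∈ Set.Icc a b, φ u ≤ 0 := by
  intro u hu
  set ψ : ℝ → ℝ := fun v => φ v * Real.exp (-(L * v)) with hψ
  have hψd : ∀ v ∈ Set.Icc a b,
      HasDerivAt ψ ((φ' v - L * φ v) * Real.exp (-(L * v))) v := by
    intro v hv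
    have h1 : HasDerivAt (fun w : ℝ => Real.exp (-(L * w))) (-L * Real.exp (-(L * v))) v := by
      have : HasDerivAt (fun w : ℝ => -(L * w)) (-L) v := by
        simpa using ((hasDerivAt_id v).const_mul L).fun_neg
      simpa [mul_comm, Function.comp_def] using (Real.hasDerivAt_exp (-(L * v))).comp v this
    have := (hd v hv).fun_mul h1
    refine this.congr_deriv ?_
    ring
  have hanti : AntitoneOn ψ (Set.Icc a b) := by
    apply antitoneOn_of_deriv_nonpos (convex_Icc a b)
    · intro v hv
      exact (hψd v hv).continuousAt.continuousWithinAt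
    · intro v hv
      rw [interior_Icc] at hv
      exact (hψd v (Ioo_subset_Icc_self hv)).differentiableAt.differentiableWithinAt
    · intro v hv
      rw [interior_Icc] at hv
      rw [(hψd v (Ioo_subset_Icc_self hv)).deriv]
      have := hle v (Ioo_subset_Icc_self hv)
      have hexp : 0 < Real.exp (-(L * v)) := Real.exp_pos _
      nlinarith
  have h1 : ψ u ≤ ψ a := hanti (Set.left_mem_Icc.2 (hu.1.trans hu.2)) hu hu.1
  have h2 : ψ a ≤ 0 := mul_nonpos_of_nonpos_of_nonneg hφa (Real.exp_pos _).le
  have h3 : ψ u ≤ 0 := h1.trans h2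
  have hexp : 0 < Real.exp (-(L * u)) := Real.exp_pos _
  by_contra hcon
  push_neg at hcon
  have : 0 < ψ u := mul_pos hcon hexp
  linarith

set_option maxHeartbeats 2000000 in
/-- Lemma 7: under stochastic relative interaction matrices with zero diagonal,
B-window strong connectivity and bounded dwell times, the set of strictly
positive components is nondecreasing in time, and if x(t₀) ∈ Δₙ \ {e₁,…,eₙ}
has m ≥ 2 nonzero entries then x(t) > 0 componentwise for t ≥ t_{(n−m)B}. -/
theorem positive_in_finite_time (n B : ℕ) (hB : 1 ≤ B)
    (τmin τmax : ℝ) (hτ : 0 < τmin) (hττ : τmin ≤ τmax)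
    (t : ℕ → ℝ) (t₀ : ℝ) (ht0 : t 0 = t₀)
    (hgap : ∀ k, t (k + 1) - t k ∈ Set.Icc τmin τmax)
    (Ck : ℕ → Matrix (Fin n) (Fin n) ℝ)
    (hstoch : ∀ k, (∀ i j, 0 ≤ Ck k i j) ∧ (∀ i, ∑ j, Ck k i j = 1) ∧
      (∀ i, Ck k i i = 0))
    (hconn : ∀ l : ℕ, ∀ i j : Fin n,
      Relation.ReflTransGen
        (fun a b => ∃ k : ℕ, l ≤ k ∧ k < l + B ∧ 0 < Ck k a b) i j)
    (x : ℝ → Fin n → ℝ)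
    (hdyn : ∀ k : ℕ, ∀ u ∈ Set.Ico (t k) (t (k + 1)), ∀ i,
      HasDerivAt (fun s => x s i)
        (-(1 - x u i) * x u i + ∑ j, Ck k j i * (1 - x u j) * x u j) u)
    (hx0 : (∀ i, 0 ≤ x t₀ i) ∧ ∑ i, x t₀ i = 1)
    (hx0ne : ∀ i : Fin n, x t₀ ≠ Pi.single i 1)
    (m : ℕ) (hm : m = (Finset.univ.filter fun i => x t₀ i ≠ 0).card)
    (hm2 : 2 ≤ m) :
    (∀ s u : ℝ, t₀ ≤ s → s ≤ u →
      {i : Fin n | 0 < x s i} ⊆ {i : Fin n | 0 < x u i}) ∧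
    (∀ u : ℝ, t ((n - m) * B) ≤ u → ∀ i, 0 < x u i) := by
  classical
  obtain ⟨hx0nn, hx0sum⟩ := hx0
  -- basic facts about t
  have htmono : StrictMono t := by
    apply strictMono_nat_of_lt_succ
    intro k
    have := (hgap k).1
    linarith
  have ht₀le : ∀ k, t₀ ≤ t k := by
    intro k
    rw [← ht0]
    exact htmono.monotone (Nat.zero_le k)
  have htlin : ∀ k : ℕ, t 0 + k * τmin ≤ t k := by
    intro k
    induction k with
    | zero => simp
    | succ k ih =>
      have := (hgap k).1
      push_cast
      push_cast at ih
      linarith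
  have hcover : ∀ u, t₀ ≤ u → ∃ k, t k ≤ u ∧ u < t (k + 1) := by
    intro u hu
    have hex : ∃ k : ℕ, u < t k := by
      obtain ⟨k, hk⟩ := exists_nat_gt ((u - t 0) / τmin)
      refine ⟨k, ?_⟩
      have h1 := htlin k
      have h2 : u - t 0 < k * τmin := by
        rw [div_lt_iff₀ hτ] at hk
        linarith
      linarith
    have hk₀ := Nat.find_spec hex
    set k₀ := Nat.find hex with hk₀def
    have hne : k₀ ≠ 0 := by
      intro h
      rw [h, ht0] at hk₀
      exact absurd hk₀ (not_lt.2 hu)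
    obtain ⟨k, hk⟩ := Nat.exists_eq_succ_of_ne_zero hne
    refine ⟨k, ?_, by rw [show k + 1 = k₀ from hk.symm]; exact hk₀⟩
    have := Nat.find_min hex (m := k) (by omega)
    exact not_lt.1 this
  -- pointwise dynamics description
  have hD : ∀ u, t₀ ≤ u → ∃ C : Matrix (Fin n) (Fin n) ℝ,
      (∀ a b, 0 ≤ C a b) ∧ (∀ a, ∑ b, C a b = 1) ∧
      (∀ i, HasDerivAt (fun s => x s i)
        (-(1 - x u i) * x u i + ∑ j, C j i * (1 - x u j) * x u j) u) := by
    intro u hu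
    obtain ⟨k, h1, h2⟩ := hcover u hu
    exact ⟨Ck k, (hstoch k).1, (hstoch k).2.1, fun i => hdyn k u ⟨h1, h2⟩ i⟩
  have hdiff : ∀ (i : Fin n) u, t₀ ≤ u → DifferentiableAt ℝ (fun s => x s i) u := by
    intro i u hu
    obtain ⟨C, _, _, hd⟩ := hD u hu
    exact (hd i).differentiableAt
  have hcont : ∀ i : Fin n, ContinuousOn (fun s => x s i) (Set.Ici t₀) :=
    fun i u hu => (hdiff i u hu).continuousAt.continuousWithinAt
  -- sum is invariant
  have hsum : ∀ u, t₀ ≤ u → ∑ i, x u i = 1 := by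
    intro u hu
    have key : ∀ v ∈ Set.Icc t₀ u, (fun s => ∑ i, x s i) v = (fun s => ∑ i, x s i) t₀ := by
      apply constant_of_has_deriv_right_zero
      · intro v hv
        obtain ⟨C, _, _, hd⟩ := hD v hv.1
        exact (HasDerivAt.fun_sum (fun i (_ : i ∈ Finset.univ) => hd i)).continuousAt.continuousWithinAt
      · intro v hv
        obtain ⟨C, hC0, hC1, hd⟩ := hD v hv.1
        have hsumd : HasDerivAt (fun s => ∑ i, x s i)
            (∑ i, (-(1 - x v i) * x v i + ∑ j, C j i * (1 - x v j) * x v j)) v :=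
          HasDerivAt.fun_sum (fun i _ => hd i)
        have hz : (∑ i, (-(1 - x v i) * x v i + ∑ j, C j i * (1 - x v j) * x v j)) = 0 := by
          rw [Finset.sum_add_distrib, Finset.sum_comm]
          have h2 : ∀ j : Fin n, (∑ i, C j i * (1 - x v j) * x v j) = (1 - x v j) * x v j := by
            intro j
            rw [← Finset.sum_mul, ← Finset.sum_mul, hC1 j, one_mul]
          simp only [h2]
          rw [← Finset.sum_add_distrib]
          apply Finset.sum_eq_zero
          intro i _
          ring
        rw [hz] at hsumd
        exact hsumd.hasDerivWithinAt
    have := key u ⟨hu, le_refl u⟩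
    simp only at this
    rw [this, hx0sum]
  -- nonnegativity
  have hnn : ∀ u, t₀ ≤ u → ∀ i, 0 ≤ x u i := by
    -- Gronwall argument on φ = ∑ (min xᵢ 0)²
    have key : ∀ b, t₀ ≤ b → (∀ v ∈ Set.Icc t₀ b, ∀ i, -1 ≤ x v i) →
        ∀ v ∈ Set.Icc t₀ b, ∀ i, 0 ≤ x v i := by
      intro b hb hbar
      set φ : ℝ → ℝ := fun s => ∑ i, (min (x s i) 0) ^ 2 with hφdef
      set φ' : ℝ → ℝ := fun s => ∑ i, 2 * min (x s i) 0 * deriv (fun w => x w i) s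
        with hφ'def
      have hder : ∀ v, t₀ ≤ v → HasDerivAt φ (φ' v) v := by
        intro v hv
        apply HasDerivAt.fun_sum
        intro i _
        have hxd : HasDerivAt (fun w => x w i) (deriv (fun w => x w i) v) v :=
          (hdiff i v hv).hasDerivAt
        exact (minsq_hasDerivAt (x v i)).comp v hxd
      set L : ℝ := 2 * n * (n + 2) * n with hLdef
      have hbound : ∀ v ∈ Set.Icc t₀ b, φ' v ≤ L * φ v := by
        intro v hv
        have hv0 : t₀ ≤ v := hv.1
        obtain ⟨C, hC0, hC1, hd⟩ := hD v hv0
        have hCle : ∀ a b', C a b' ≤ 1 := by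
          intro a b'
          calc C a b' ≤ ∑ c, C a c :=
                Finset.single_le_sum (fun c _ => hC0 a c) (Finset.mem_univ b')
            _ = 1 := hC1 a
        set g : ℝ := ∑ j, -(min (x v j) 0) with hgdef
        have hgterm : ∀ j : Fin n, 0 ≤ -(min (x v j) 0) := by
          intro j
          have := min_le_right (x v j) 0
          linarith
        have hg0 : 0 ≤ g := Finset.sum_nonneg fun j _ => hgterm j
        have hsingle : ∀ j : Fin n, -(min (x v j) 0) ≤ g :=
          fun j => Finset.single_le_sum (fun c _ => hgterm c) (Finset.mem_univ j)
        have hgn : g ≤ n := by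
          have : ∀ j : Fin n, -(min (x v j) 0) ≤ 1 := by
            intro j
            have h1 := hbar v hv j
            have h2 : -1 ≤ min (x v j) 0 := le_min h1 (by norm_num)
            linarith
          calc g ≤ ∑ _j : Fin n, (1 : ℝ) := Finset.sum_le_sum fun j _ => this j
            _ = n := by simp
        have hsumv := hsum v hv0
        have hxle : ∀ j : Fin n, x v j ≤ 1 + g := by
          intro j
          have e1 : x v j + ∑ l ∈ Finset.univ.erase j, x v l = ∑ l, x v l :=
            Finset.add_sum_erase _ _ (Finset.mem_univ j)
          have e2 : min (x v j) 0 + ∑ l ∈ Finset.univ.erase j, min (x v l) 0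
              = ∑ l, min (x v l) 0 :=
            Finset.add_sum_erase _ (fun l => min (x v l) 0) (Finset.mem_univ j)
          have e3 : ∑ l ∈ Finset.univ.erase j, min (x v l) 0
              ≤ ∑ l ∈ Finset.univ.erase j, x v l :=
            Finset.sum_le_sum fun l _ => min_le_left _ _
          have e4 : g = -∑ l, min (x v l) 0 := by
            rw [hgdef, ← Finset.sum_neg_distrib]
          have e5 : min (x v j) 0 ≤ 0 := min_le_right _ _
          linarith
        have hprod : ∀ j : Fin n, -((n + 2) * g) ≤ (1 - x v j) * x v j := by
          intro j
          have hb1 : -1 ≤ x v j := hbar v hv j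
          have hle' : x v j ≤ 1 + g := hxle j
          have hxg : -(x v j) ≤ g := by
            rcases le_or_gt (x v j) 0 with h | h
            · have := hsingle j
              rw [min_eq_left h] at this
              exact this
            · linarith
          rcases le_or_gt 0 (x v j) with h | h
          · rcases le_or_gt (x v j) 1 with h1 | h1
            · nlinarith
            · nlinarith [mul_nonneg (by linarith : (0:ℝ) ≤ g - (x v j - 1))
                (by linarith : (0:ℝ) ≤ x v j),
                mul_nonneg hg0 (by linarith : (0:ℝ) ≤ 1 + (n:ℝ) - x v j)]
          · nlinarith
        have hcol : ∀ i : Fin n,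
            -((n : ℝ) * ((n + 2) * g)) ≤ ∑ j, C j i * (1 - x v j) * x v j := by
          intro i
          have hterm : ∀ j : Fin n, -((n + 2) * g) ≤ C j i * (1 - x v j) * x v j := by
            intro j
            have h1 := hprod j
            have h2 := hC0 j i
            have h3 := hCle j i
            rcases le_or_gt 0 ((1 - x v j) * x v j) with h | h
            · nlinarith
            · nlinarith
          calc -((n : ℝ) * ((n + 2) * g)) = ∑ _j : Fin n, -((n + 2) * g) := by
                simp [Finset.sum_const, mul_assoc]
            _ ≤ ∑ j, C j i * (1 - x v j) * x v j :=
                Finset.sum_le_sum fun j _ => hterm j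
        have hperi : ∀ i : Fin n,
            2 * min (x v i) 0 * deriv (fun w => x w i) v
              ≤ 2 * n * (n + 2) * g * (-(min (x v i) 0)) := by
          intro i
          rw [(hd i).deriv]
          rcases le_or_gt 0 (x v i) with h | h
          · rw [min_eq_right h]
            simp
          · rw [min_eq_left h.le]
            have hc := hcol i
            have hx2 : (0:ℝ) ≤ 1 - x v i := by linarith
            nlinarith [mul_nonneg (by linarith : (0:ℝ) ≤ -(2 * x v i))
                (by linarith : (0:ℝ) ≤ (∑ j, C j i * (1 - x v j) * x v j)
                  + (n : ℝ) * ((n + 2) * g)),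
              mul_nonneg hx2 (sq_nonneg (x v i))]
        have hsumle : φ' v ≤ 2 * n * (n + 2) * g * g := by
          calc φ' v ≤ ∑ i, 2 * n * (n + 2) * g * (-(min (x v i) 0)) :=
                Finset.sum_le_sum fun i _ => hperi i
            _ = 2 * n * (n + 2) * g * g := by
                rw [← Finset.mul_sum, ← hgdef]
        have hgsq : g * g ≤ n * φ v := by
          have h1 : (∑ j, -(min (x v j) 0)) ^ 2
              ≤ (Finset.univ : Finset (Fin n)).card * ∑ j, (-(min (x v j) 0)) ^ 2 :=
            sq_sum_le_card_mul_sum_sq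
          simp only [neg_sq, Finset.card_univ, Fintype.card_fin] at h1
          calc g * g = (∑ j, -(min (x v j) 0)) ^ 2 := by rw [hgdef]; ring
            _ ≤ n * ∑ j, (min (x v j) 0) ^ 2 := h1
            _ = n * φ v := rfl
        calc φ' v ≤ 2 * n * (n + 2) * g * g := hsumle
          _ ≤ 2 * n * (n + 2) * (n * φ v) := by
              rw [mul_assoc]
              exact mul_le_mul_of_nonneg_left hgsq (by positivity)
          _ = L * φ v := by rw [hLdef]; ring
      have hφ0 : φ t₀ ≤ 0 := by
        have : φ t₀ = 0 := by
          apply Finset.sum_eq_zero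
          intro i _
          rw [min_eq_right (hx0nn i)]
          norm_num
        linarith
      have hGr := nonpos_of_deriv_le_gronwall φ φ' t₀ b L hφ0
        (fun w hw => hder w hw.1) hbound
      intro v hv i
      have h1 : φ v ≤ 0 := hGr v hv
      have h2 : ∀ j ∈ Finset.univ, (0:ℝ) ≤ (min (x v j) 0) ^ 2 :=
        fun j _ => sq_nonneg _
      have h3 : φ v = 0 := le_antisymm h1 (Finset.sum_nonneg h2)
      have h4 : (min (x v i) 0) ^ 2 = 0 :=
        (Finset.sum_eq_zero_iff_of_nonneg h2).1 h3 i (Finset.mem_univ i)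
      have h5 : min (x v i) 0 = 0 := by
        exact pow_eq_zero_iff (by norm_num) |>.1 h4
      rcases le_or_gt 0 (x v i) with h | h
      · exact h
      · rw [min_eq_left h.le] at h5
        linarith
    -- the barrier argument
    intro u hu
    set Bs : Set ℝ := {v | v ∈ Set.Icc t₀ u ∧ ∃ i, x v i ≤ -1} with hBs
    have hclosed : IsClosed Bs := by
      have heq : Bs = ⋃ i : Fin n,
          (Set.Icc t₀ u ∩ (fun w => x w i) ⁻¹' Set.Iic (-1)) := by
        ext v
        simp only [hBs, Set.mem_setOf_eq, Set.mem_iUnion, Set.mem_inter_iff,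
          Set.mem_preimage, Set.mem_Iic]
        tauto
      rw [heq]
      apply isClosed_iUnion_of_finite
      intro i
      exact ContinuousOn.preimage_isClosed_of_isClosed
        ((hcont i).mono (fun w hw => hw.1)) isClosed_Icc isClosed_Iic
    rcases Set.eq_empty_or_nonempty Bs with hemp | hne
    · have hbar : ∀ v ∈ Set.Icc t₀ u, ∀ i, -1 ≤ x v i := by
        intro v hv i
        by_contra h
        push_neg at h
        have : v ∈ Bs := ⟨hv, i, h.le⟩
        rw [hemp] at this
        exact this
      exact key u hu hbar u ⟨hu, le_refl u⟩
    · exfalso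
      have hbdd : BddBelow Bs := ⟨t₀, fun v hv => hv.1.1⟩
      set s' := sInf Bs with hs'
      have hs'mem : s' ∈ Bs := hclosed.csInf_mem hne hbdd
      obtain ⟨hs'Icc, i', hi'⟩ := hs'mem
      have ht₀s' : t₀ < s' := by
        rcases eq_or_lt_of_le hs'Icc.1 with h | h
        · exfalso
          have := hx0nn i'
          rw [← h] at hi'
          linarith
        · exact h
      have hIco : ∀ v ∈ Set.Ico t₀ s', ∀ i, 0 ≤ x v i := by
        intro v hv
        apply key v hv.1 ?_ v ⟨hv.1, le_refl v⟩
        intro w hw i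
        by_contra h
        push_neg at h
        have hwB : w ∈ Bs :=
          ⟨⟨hw.1, (hw.2.trans hv.2.le).trans hs'Icc.2⟩, i, h.le⟩
        have h1 := csInf_le hbdd hwB
        have h2 : w < s' := lt_of_le_of_lt hw.2 hv.2
        rw [← hs'] at h1
        linarith
      have hneBot : (nhdsWithin s' (Set.Ico t₀ s')).NeBot :=
        right_nhdsWithin_Ico_neBot ht₀s'
      have htend : Filter.Tendsto (fun w => x w i')
          (nhdsWithin s' (Set.Ico t₀ s')) (nhds (x s' i')) := by
        have h1 : ContinuousWithinAt (fun w => x w i') (Set.Ico t₀ s') s' :=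
          ((hcont i') s' hs'Icc.1).mono (fun w hw => hw.1)
        exact h1
      have h0 : 0 ≤ x s' i' := by
        apply ge_of_tendsto htend
        filter_upwards [self_mem_nhdsWithin] with w hw
        exact hIco w hw i'
      linarith
  have hle1 : ∀ u, t₀ ≤ u → ∀ i, x u i ≤ 1 := by
    intro u hu i
    have h1 := hsum u hu
    have : x u i ≤ ∑ j, x u j :=
      Finset.single_le_sum (fun j _ => hnn u hu j) (Finset.mem_univ i)
    linarith
  -- persistence of positivity
  have hpers : ∀ (i : Fin n) s u, t₀ ≤ s → s ≤ u → 0 < x s i → 0 < x u i := by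
    intro i s u hs hsu hpos
    set y : ℝ → ℝ := fun v => Real.exp v * x v i with hy
    have hkey : ∀ v, t₀ ≤ v → ∃ d, HasDerivAt y d v ∧ 0 ≤ d := by
      intro v hv
      obtain ⟨C, hC0, hC1, hd⟩ := hD v hv
      have h1 : HasDerivAt y
          (Real.exp v * x v i + Real.exp v *
            (-(1 - x v i) * x v i + ∑ j, C j i * (1 - x v j) * x v j)) v :=
        (Real.hasDerivAt_exp v).mul (hd i)
      refine ⟨_, h1, ?_⟩
      have hcol : 0 ≤ ∑ j, C j i * (1 - x v j) * x v j := by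
        apply Finset.sum_nonneg
        intro j _
        have h2 := hle1 v hv j
        exact mul_nonneg (mul_nonneg (hC0 j i) (by linarith)) (hnn v hv j)
      have heq : Real.exp v * x v i + Real.exp v *
          (-(1 - x v i) * x v i + ∑ j, C j i * (1 - x v j) * x v j)
          = Real.exp v * ((x v i) ^ 2 + ∑ j, C j i * (1 - x v j) * x v j) := by
        ring
      rw [heq]
      apply mul_nonneg (Real.exp_pos v).le
      have := sq_nonneg (x v i)
      linarith
    have hmono : MonotoneOn y (Set.Icc s u) := by
      apply monotoneOn_of_deriv_nonneg (convex_Icc s u)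
      · intro v hv
        exact (hkey v (hs.trans hv.1)).choose_spec.1.continuousAt.continuousWithinAt
      · intro v hv
        rw [interior_Icc] at hv
        exact (hkey v (hs.trans hv.1.le)).choose_spec.1.differentiableAt.differentiableWithinAt
      · intro v hv
        rw [interior_Icc] at hv
        obtain ⟨d, hd, hdn⟩ := hkey v (hs.trans hv.1.le)
        rw [hd.deriv]
        exact hdn
    have h1 : y s ≤ y u := hmono ⟨le_refl s, hsu⟩ ⟨hsu, le_refl u⟩ hsu
    have h2 : 0 < y s := mul_pos (Real.exp_pos s) hpos
    have h3 : 0 < Real.exp u * x u i := lt_of_lt_of_le h2 h1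
    nlinarith [Real.exp_pos u]
  -- two positive coordinates at t₀
  have htwo : ∃ a b : Fin n, a ≠ b ∧ 0 < x t₀ a ∧ 0 < x t₀ b := by
    have h2 : 1 < (Finset.univ.filter fun i => x t₀ i ≠ 0).card := by omega
    obtain ⟨a, ha, b, hb, hab⟩ := Finset.one_lt_card.mp h2
    rw [Finset.mem_filter] at ha hb
    exact ⟨a, b, hab, lt_of_le_of_ne (hx0nn a) (Ne.symm ha.2),
      lt_of_le_of_ne (hx0nn b) (Ne.symm hb.2)⟩
  have hlt1 : ∀ u, t₀ ≤ u → ∀ i, x u i < 1 := by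
    intro u hu i
    obtain ⟨a, b, hab, ha, hb⟩ := htwo
    have hc : ∃ c, c ≠ i ∧ 0 < x u c := by
      by_cases h : a = i
      · refine ⟨b, ?_, hpers b t₀ u (le_refl t₀) hu hb⟩
        rw [← h]
        exact hab.symm
      · exact ⟨a, h, hpers a t₀ u (le_refl t₀) hu ha⟩
    obtain ⟨c, hci, hc⟩ := hc
    have hsum' := hsum u hu
    have hpair : x u i + x u c = ∑ j ∈ ({i, c} : Finset (Fin n)), x u j :=
      (Finset.sum_pair (Ne.symm hci)).symm
    have hle : ∑ j ∈ ({i, c} : Finset (Fin n)), x u j ≤ ∑ j, x u j :=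
      Finset.sum_le_sum_of_subset_of_nonneg (Finset.subset_univ _)
        (fun j _ _ => hnn u hu j)
    linarith
  -- spreading of positivity along edges
  have hspread : ∀ (k : ℕ) (a i : Fin n), 0 < x (t k) a → 0 < Ck k a i →
      0 < x (t (k + 1)) i := by
    intro k a i ha hC
    have hk0 : t₀ ≤ t k := ht₀le k
    have hkk : t k < t (k + 1) := htmono (Nat.lt_succ_self k)
    set y : ℝ → ℝ := fun v => Real.exp v * x v i with hy
    have hmono : StrictMonoOn y (Set.Icc (t k) (t (k + 1))) := by
      apply strictMonoOn_of_deriv_pos (convex_Icc _ _)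
      · intro v hv
        obtain ⟨C', _, _, hd⟩ := hD v (hk0.trans hv.1)
        exact ((Real.hasDerivAt_exp v).mul (hd i)).continuousAt.continuousWithinAt
      · intro v hv
        rw [interior_Icc] at hv
        have hv1 : t k ≤ v := hv.1.le
        have hv0 : t₀ ≤ v := hk0.trans hv1
        have hd := hdyn k v ⟨hv1, hv.2⟩ i
        have hder : HasDerivAt y
            (Real.exp v * x v i + Real.exp v *
              (-(1 - x v i) * x v i + ∑ j, Ck k j i * (1 - x v j) * x v j)) v :=
          (Real.hasDerivAt_exp v).mul hd
        rw [hder.deriv]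
        have hxa : 0 < x v a := hpers a (t k) v hk0 hv1 ha
        have hxa1 : x v a < 1 := hlt1 v hv0 a
        have hterm : 0 < Ck k a i * (1 - x v a) * x v a :=
          mul_pos (mul_pos hC (by linarith)) hxa
        have hcol : Ck k a i * (1 - x v a) * x v a
            ≤ ∑ j, Ck k j i * (1 - x v j) * x v j := by
          apply Finset.single_le_sum (f := fun j => Ck k j i * (1 - x v j) * x v j)
            (fun j _ => ?_) (Finset.mem_univ a)
          have h2 := hle1 v hv0 j
          exact mul_nonneg (mul_nonneg ((hstoch k).1 j i) (by linarith)) (hnn v hv0 j)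
        have heq : Real.exp v * x v i + Real.exp v *
            (-(1 - x v i) * x v i + ∑ j, Ck k j i * (1 - x v j) * x v j)
            = Real.exp v * ((x v i) ^ 2 + ∑ j, Ck k j i * (1 - x v j) * x v j) := by
          ring
        rw [heq]
        apply mul_pos (Real.exp_pos v)
        nlinarith [sq_nonneg (x v i)]
    have hlt := hmono (Set.left_mem_Icc.2 hkk.le) (Set.right_mem_Icc.2 hkk.le) hkk
    have hy0 : 0 ≤ y (t k) := mul_nonneg (Real.exp_pos _).le (hnn _ hk0 i)
    have h3 : 0 < Real.exp (t (k + 1)) * x (t (k + 1)) i := lt_of_le_of_lt hy0 hlt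
    nlinarith [Real.exp_pos (t (k + 1))]
  -- the set of positive coordinates
  set P : ℕ → Finset (Fin n) := fun k => Finset.univ.filter (fun i => 0 < x (t k) i) with hP
  have hPmono : ∀ k l, k ≤ l → P k ⊆ P l := by
    intro k l hkl i hi
    simp only [hP, Finset.mem_filter, Finset.mem_univ, true_and] at hi ⊢
    exact hpers i (t k) (t l) (ht₀le k) (htmono.monotone hkl) hi
  have hgrow : ∀ k, P k ≠ Finset.univ → P k ⊂ P (k + B) := by
    intro k hne
    obtain ⟨a0, b0, hab, ha0, hb0⟩ := htwo
    have ha0k : a0 ∈ P k := by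
      simp only [hP, Finset.mem_filter, Finset.mem_univ, true_and]
      exact hpers a0 t₀ (t k) (le_refl t₀) (ht₀le k) ha0
    obtain ⟨j₀, hj₀⟩ : ∃ j₀, j₀ ∉ P k := by
      by_contra h
      push_neg at h
      exact hne (Finset.eq_univ_of_forall h)
    have hcross : ∃ a b : Fin n, a ∈ P k ∧ b ∉ P k ∧
        ∃ k', k ≤ k' ∧ k' < k + B ∧ 0 < Ck k' a b := by
      have general : ∀ c : Fin n,
          Relation.ReflTransGen (fun a b => ∃ k', k ≤ k' ∧ k' < k + B ∧ 0 < Ck k' a b) c j₀ →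
          c ∈ P k → ∃ a b : Fin n, a ∈ P k ∧ b ∉ P k ∧
            ∃ k', k ≤ k' ∧ k' < k + B ∧ 0 < Ck k' a b := by
        intro c hc
        induction hc using Relation.ReflTransGen.head_induction_on with
        | refl => intro h; exact absurd h hj₀
        | @head a c h' h ih =>
          intro hmem
          by_cases hcP : c ∈ P k
          · exact ih hcP
          · exact ⟨a, c, hmem, hcP, h'⟩
      exact general a0 (hconn k a0 j₀) ha0k
    obtain ⟨a, b, haP, hbP, k', hk1, hk2, hCk⟩ := hcross
    have hxa : 0 < x (t k') a := by
      simp only [hP, Finset.mem_filter, Finset.mem_univ, true_and] at haP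
      exact hpers a (t k) (t k') (ht₀le k) (htmono.monotone hk1) haP
    have hb' : 0 < x (t (k' + 1)) b := hspread k' a b hxa hCk
    have hbB : b ∈ P (k + B) := by
      simp only [hP, Finset.mem_filter, Finset.mem_univ, true_and]
      exact hpers b (t (k' + 1)) (t (k + B)) (ht₀le _) (htmono.monotone (by omega)) hb'
    rw [Finset.ssubset_def]
    exact ⟨hPmono k (k + B) (by omega), fun h => hbP (h hbB)⟩
  have hmn : m ≤ n := by
    rw [hm]
    calc (Finset.univ.filter fun i => x t₀ i ≠ 0).card ≤ Finset.univ.card :=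
          Finset.card_filter_le _ _
      _ = n := by simp
  have hP0 : P 0 = Finset.univ.filter (fun i => x t₀ i ≠ 0) := by
    apply Finset.filter_congr
    intro i _
    rw [ht0]
    constructor
    · intro h; exact h.ne'
    · intro h; exact lt_of_le_of_ne (hx0nn i) (Ne.symm h)
  have hind : ∀ j : ℕ, min n (m + j) ≤ (P (j * B)).card := by
    intro j
    induction j with
    | zero =>
      simp only [Nat.zero_mul, hP0, ← hm]
      omega
    | succ j ih =>
      by_cases hu : P (j * B) = Finset.univ
      · have : P ((j + 1) * B) = Finset.univ :=
          Finset.eq_univ_of_forall fun i => hPmono (j * B) ((j+1)*B) (by nlinarith) (hu ▸ Finset.mem_univ i)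
        rw [this]
        simp only [Finset.card_univ, Fintype.card_fin]
        omega
      · have hss := hgrow (j * B) hu
        have h1 : (P (j * B)).card < (P (j * B + B)).card := Finset.card_lt_card hss
        have h2 : j * B + B = (j + 1) * B := by ring
        rw [h2] at h1
        omega
  have hfull : ∀ i, 0 < x (t ((n - m) * B)) i := by
    have h1 := hind (n - m)
    have h2 : min n (m + (n - m)) = n := by omega
    rw [h2] at h1
    have h3 : P ((n - m) * B) = Finset.univ := by
      apply Finset.eq_univ_of_card
      have : (P ((n - m) * B)).card ≤ n := by
        calc (P ((n - m) * B)).card ≤ Finset.univ.card := Finset.card_le_univ _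
          _ = n := by simp
      simp only [Fintype.card_fin]
      omega
    intro i
    have := h3 ▸ Finset.mem_univ i
    simpa [hP, Finset.mem_filter] using this
  constructor
  · intro s u hs hsu i hi
    exact hpers i s u hs hsu hi
  · intro u hu i
    exact hpers i (t ((n - m) * B)) u (ht₀le _) hu (hfull i)
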